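/- arXiv:math/9205206 — 2 statements merged into one kernel-verified Lean document; each statement's English description precedes it below -/
import Mathlib

section
/- Suppose 0 < q < p < ∞ and μ is a finite Borel measure on a compact Hausdorff space Ω. For every Borel function f, ‖f‖_{Λ_{p,q}(μ)} = inf_𝒯 (Σ_{j=1}^n f*(τ_{j−1})^q (τ_j − τ_{j−1})^{q/p})^{1/q}, where the infimum runs over all finite sets 𝒯 = {τ_0 = 0 < τ_1 < ⋯ < τ_n = μ(Ω)} and f* denotes the decreasing rearrangement of |f|. -/
open Set Filter Topology MeasureTheory ENNReal

/-- `A : Fin n → Set Ω` is a finite Borel partition of `Ω`. -/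
def IsBorelPartition {Ω : Type*} [MeasurableSpace Ω] {n : ℕ} (A : Fin n → Set Ω) : Prop :=
  (∀ i, MeasurableSet (A i)) ∧ Pairwise (Function.onFun Disjoint A) ∧ (⋃ i, A i) = univ

/-- The `Λ_{p,q}(μ)` functional for `p < q`:
`sup (Σᵢ (inf_{ω ∈ Aᵢ} |f ω|)^q μ(Aᵢ)^{q/p})^{1/q}` over finite Borel partitions. -/
noncomputable def LambdaSup {Ω : Type*} [MeasurableSpace Ω]
    (μ : Measure Ω) (p q : ℝ) (f : Ω → ℝ) : ℝ≥0∞ :=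
  ⨆ (n : ℕ) (A : Fin n → Set Ω) (_ : IsBorelPartition A),
    (∑ i, (⨅ x ∈ A i, ENNReal.ofReal |f x|) ^ q * μ (A i) ^ (q / p)) ^ (1 / q)

/-- The `Λ_{p,q}(μ)` functional for `q < p`:
`inf (Σᵢ (sup_{ω ∈ Aᵢ} |f ω|)^q μ(Aᵢ)^{q/p})^{1/q}` over finite Borel partitions.
(Here `LambdaInf μ p q` has inner exponent `q` and measure exponent `q/p`.) -/
noncomputable def LambdaInf {Ω : Type*} [MeasurableSpace Ω]
    (μ : Measure Ω) (p q : ℝ) (f : Ω → ℝ) : ℝ≥0∞ :=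
  ⨅ (n : ℕ) (A : Fin n → Set Ω) (_ : IsBorelPartition A),
    (∑ i, (⨆ x ∈ A i, ENNReal.ofReal |f x|) ^ q * μ (A i) ^ (q / p)) ^ (1 / q)

/-- The decreasing rearrangement `f*(t) = inf_{μ(E) ≤ t} sup_{ω ∉ E} |f ω|`. -/
noncomputable def decRearr {Ω : Type*} [MeasurableSpace Ω]
    (μ : Measure Ω) (f : Ω → ℝ) (t : ℝ) : ℝ≥0∞ :=
  ⨅ (E : Set Ω) (_ : MeasurableSet E) (_ : μ E ≤ ENNReal.ofReal t),
    ⨆ x ∈ Eᶜ, ENNReal.ofReal |f x|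

/-- The Lorentz quasinorm `‖f‖_{L_{p,q}(μ)} = (∫₀^∞ (q/p) t^{q/p-1} f*(t)^q dt)^{1/q}`. -/
noncomputable def LorentzNorm {Ω : Type*} [MeasurableSpace Ω]
    (μ : Measure Ω) (p q : ℝ) (f : Ω → ℝ) : ℝ≥0∞ :=
  (∫⁻ t in Ioi (0 : ℝ),
      ENNReal.ofReal (q / p * t ^ (q / p - 1)) * decRearr μ f t ^ q) ^ (1 / q)

private lemma chain_mono {α : Type*} [Preorder α] {g : ℕ → α} {n : ℕ}
    (h : ∀ j, j < n → g j ≤ g (j+1)) : ∀ i j : ℕ, i ≤ j → j ≤ n → g i ≤ g j := by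
  intro i j hij hjn
  induction j with
  | zero =>
    have : i = 0 := by omega
    subst this; exact le_rfl
  | succ m ihm =>
    rcases Nat.lt_or_ge i (m+1) with hlt | hge
    · exact le_trans (ihm (by omega) (by omega)) (h m (by omega))
    · have : i = m + 1 := by omega
      subst this; exact le_rfl

private lemma rpow_subadd {r : ℝ} (hr0 : 0 ≤ r) (hr1 : r ≤ 1) {a b : ℝ}
    (ha : 0 ≤ a) (hb : 0 ≤ b) : (a + b) ^ r ≤ a ^ r + b ^ r := by
  have e : ∀ x : ℝ, 0 ≤ x → ((x.toNNReal : ℝ)) = x := fun x hx => Real.coe_toNNReal x hx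
  calc (a + b) ^ r = ((a.toNNReal + b.toNNReal : NNReal) : ℝ) ^ r := by
        rw [NNReal.coe_add, e a ha, e b hb]
    _ = (((a.toNNReal + b.toNNReal) ^ r : NNReal) : ℝ) := by rw [NNReal.coe_rpow]
    _ ≤ ((a.toNNReal ^ r + b.toNNReal ^ r : NNReal) : ℝ) := by
        exact_mod_cast NNReal.rpow_add_le_add_rpow _ _ hr0 hr1
    _ = a ^ r + b ^ r := by
        rw [NNReal.coe_add, NNReal.coe_rpow, NNReal.coe_rpow, e a ha, e b hb]

private lemma two_point_concave {r : ℝ} (hr0 : 0 ≤ r) (hr1 : r ≤ 1)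
    {u v a b : ℝ} (hu : 0 ≤ u) (hv : 0 ≤ v) (ha : 0 ≤ a) (hb : 0 ≤ b) (hab : a + b = 1) :
    a * u ^ r + b * v ^ r ≤ (a * u + b * v) ^ r := by
  have h := (Real.concaveOn_rpow hr0 hr1).2 (Set.mem_Ici.2 hu) (Set.mem_Ici.2 hv) ha hb hab
  simpa [smul_eq_mul] using h

private lemma psi_le {r : ℝ} (hr0 : 0 < r) (hr1 : r ≤ 1)
    {W1 W2 A B C x : ℝ} (hW2 : 0 ≤ W2) (hW12 : W2 ≤ W1)
    (hAx : A ≤ x) (hxB : x ≤ B) (hBC : B ≤ C)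
    (hstar : W1 * (B - A) ^ r + W2 * (C - B) ^ r < W1 * (C - A) ^ r) :
    W1 * (x - A) ^ r + W2 * (C - x) ^ r ≤ W1 * (B - A) ^ r + W2 * (C - B) ^ r := by
  have hW1 : 0 ≤ W1 := le_trans hW2 hW12
  have hBC' : B < C := by
    rcases lt_or_eq_of_le hBC with h | h
    · exact h
    · exfalso
      rw [← h, sub_self, Real.zero_rpow (ne_of_gt hr0), mul_zero, add_zero, h] at hstar
      exact lt_irrefl _ hstar
  by_contra hcon
  push_neg at hcon
  have hCx : (0:ℝ) < C - x := by linarith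
  set lam := (C - B) / (C - x) with hlam
  set mu := (B - x) / (C - x) with hmu
  have hlam0 : 0 < lam := by rw [hlam]; apply div_pos <;> linarith
  have hmu0 : 0 ≤ mu := by rw [hmu]; apply div_nonneg <;> linarith
  have hlm : lam + mu = 1 := by
    rw [hlam, hmu, ← add_div, div_eq_one_iff_eq (ne_of_gt hCx)]
    ring
  have h1 : lam * (x - A) ^ r + mu * (C - A) ^ r ≤ (B - A) ^ r := by
    have h := two_point_concave hr0.le hr1 (by linarith : (0:ℝ) ≤ x - A)
      (by linarith : (0:ℝ) ≤ C - A) hlam0.le hmu0 hlm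
    have heq : lam * (x - A) + mu * (C - A) = B - A := by
      rw [hlam, hmu]
      field_simp
      ring
    rwa [heq] at h
  have h2 : lam * (C - x) ^ r ≤ (C - B) ^ r := by
    have h := two_point_concave hr0.le hr1 (by linarith : (0:ℝ) ≤ C - x)
      (le_refl (0:ℝ)) hlam0.le hmu0 hlm
    have heq : lam * (C - x) + mu * 0 = C - B := by
      rw [hlam, hmu]
      field_simp
      ring
    rw [heq, Real.zero_rpow (ne_of_gt hr0), mul_zero, add_zero] at h
    exact h
  have key1 : W1 * (B - A) ^ r ≥ W1 * (lam * (x - A) ^ r + mu * (C - A) ^ r) :=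
    mul_le_mul_of_nonneg_left h1 hW1
  have key2 : W2 * (C - B) ^ r ≥ W2 * (lam * (C - x) ^ r) :=
    mul_le_mul_of_nonneg_left h2 hW2
  have key3 : lam * (W1 * (x - A) ^ r + W2 * (C - x) ^ r) >
      lam * (W1 * (B - A) ^ r + W2 * (C - B) ^ r) :=
    mul_lt_mul_of_pos_left hcon hlam0
  have key4 : mu * (W1 * (C - A) ^ r) ≥ mu * (W1 * (B - A) ^ r + W2 * (C - B) ^ r) :=
    mul_le_mul_of_nonneg_left hstar.le hmu0
  have key5 : lam * (W1 * (B - A) ^ r + W2 * (C - B) ^ r)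
      + mu * (W1 * (B - A) ^ r + W2 * (C - B) ^ r)
      = W1 * (B - A) ^ r + W2 * (C - B) ^ r := by
    rw [← add_mul, hlm, one_mul]
  nlinarith [key1, key2, key3, key4, key5]

private lemma num {r : ℝ} (hr0 : 0 < r) (hr1 : r ≤ 1) :
    ∀ n : ℕ, 1 ≤ n → ∀ W τ μm : ℕ → ℝ,
    (∀ i j : ℕ, i ≤ j → j < n → W j ≤ W i) →
    (∀ j, j < n → 0 ≤ W j) →
    τ 0 = 0 →
    (∀ j, j < n → τ j ≤ τ (j+1)) →
    (∀ j, j < n → μm j ≤ τ j) →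
    (∀ j, j ≤ n → 0 ≤ μm j) →
    (∀ j, j < n → μm j ≤ μm (j+1)) →
    μm n = τ n →
    (∀ i j : ℕ, i < j → j < n → W j < W i → τ i ≤ μm j) →
    ∃ (m : ℕ) (k : ℕ → ℕ), 1 ≤ m ∧ k 0 = 0 ∧ k m = n ∧ (∀ l, l < m → k l < k (l+1)) ∧
      ∑ l ∈ Finset.range m, W (k l) * (μm (k (l+1)) - μm (k l)) ^ r ≤
      ∑ j ∈ Finset.range n, W j * (τ (j+1) - τ j) ^ r := by
  intro n
  induction n with
  | zero => intro h; omega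
  | succ N ih =>
    intro _ W τ μm hW hW0 hτ0 hτm hμτ hμ0 hμm hμn hH5
    rcases Nat.eq_zero_or_pos N with rfl | hN
    · -- base case n = 1
      refine ⟨1, id, le_rfl, rfl, rfl, fun l hl => by simp only [id_eq]; omega, ?_⟩
      have hμ00 : μm 0 = 0 := le_antisymm (by
        have h := hμτ 0 (by omega); rwa [hτ0] at h) (hμ0 0 (by omega))
      simp only [Finset.sum_range_one, id_eq]
      norm_num [hμ00, hμn, hτ0]
    · obtain ⟨M, rfl⟩ : ∃ M, N = M + 1 := ⟨N - 1, by omega⟩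
      -- n = M + 1 + 1
      have hτnn : ∀ j, j ≤ M + 2 → 0 ≤ τ j := by
        intro j hj
        have h := chain_mono hτm 0 j (by omega) (by omega)
        rwa [hτ0] at h
      have hAB : τ M ≤ τ (M+1) := hτm M (by omega)
      have hBCle : τ (M+1) ≤ τ (M+1+1) := hτm (M+1) (by omega)
      by_cases hcase : W M * (τ (M+1+1) - τ M) ^ r ≤
          W M * (τ (M+1) - τ M) ^ r + W (M+1) * (τ (M+1+1) - τ (M+1)) ^ r
      · -- branch (i): merge last two intervals
        have hτ'e : ∀ j, j ≠ M + 1 → Function.update τ (M+1) (τ (M+1+1)) j = τ j :=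
          fun j hj => Function.update_of_ne hj _ _
        have hτ's : Function.update τ (M+1) (τ (M+1+1)) (M+1) = τ (M+1+1) :=
          Function.update_self _ _ _
        have hμ'e : ∀ j, j ≠ M + 1 → Function.update μm (M+1) (τ (M+1+1)) j = μm j :=
          fun j hj => Function.update_of_ne hj _ _
        have hμ's : Function.update μm (M+1) (τ (M+1+1)) (M+1) = τ (M+1+1) :=
          Function.update_self _ _ _
        obtain ⟨m', k', hm', hk0, hkm, hkinc, hsum⟩ :=
          ih (by omega) W (Function.update τ (M+1) (τ (M+1+1)))
            (Function.update μm (M+1) (τ (M+1+1)))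
            (fun i j hij hj => hW i j hij (by omega))
            (fun j hj => hW0 j (by omega))
            (by rw [hτ'e 0 (by omega)]; exact hτ0)
            (by
              intro j hj
              rcases Nat.lt_or_ge j M with h | h
              · rw [hτ'e j (by omega), hτ'e (j+1) (by omega)]
                exact hτm j (by omega)
              · obtain rfl : j = M := by omega
                rw [hτ'e j (by omega), hτ's]
                exact le_trans hAB hBCle)
            (by
              intro j hj
              rw [hτ'e j (by omega), hμ'e j (by omega)]
              exact hμτ j (by omega))
            (by
              intro j hj
              rcases Nat.lt_or_ge j (M+1) with h | h
              · rw [hμ'e j (by omega)]; exact hμ0 j (by omega)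
              · obtain rfl : j = M + 1 := by omega
                rw [hμ's]
                exact hτnn (M+2) le_rfl)
            (by
              intro j hj
              rcases Nat.lt_or_ge j M with h | h
              · rw [hμ'e j (by omega), hμ'e (j+1) (by omega)]
                exact hμm j (by omega)
              · obtain rfl : j = M := by omega
                rw [hμ'e j (by omega), hμ's]
                exact le_trans (hμτ j (by omega)) (le_trans hAB hBCle))
            (by rw [hτ's, hμ's])
            (by
              intro i j hij hj hWij
              rw [hτ'e i (by omega), hμ'e j (by omega)]
              exact hH5 i j hij (by omega) hWij)
        have hkub : ∀ l, l < m' → k' l < M + 1 := by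
          intro l hl
          have h1 : k' l < k' (l+1) := hkinc l hl
          have h2 : k' (l+1) ≤ k' m' :=
            chain_mono (g := k') (n := m') (fun j hj => (hkinc j hj).le) (l+1) m' (by omega) le_rfl
          omega
        refine ⟨m', Function.update k' m' (M+1+1), hm', ?_, Function.update_self _ _ _, ?_, ?_⟩
        · rw [Function.update_of_ne (by omega) _ _]; exact hk0
        · intro l hl
          rcases Nat.lt_or_ge (l+1) m' with h | h
          · rw [Function.update_of_ne (by omega) _ _, Function.update_of_ne (by omega) _ _]
            exact hkinc l hl
          · obtain hl1 : l + 1 = m' := by omega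
            rw [Function.update_of_ne (by omega) _ _, hl1, Function.update_self]
            have h3 := hkub l hl
            omega
        · -- sum bound
          have hsum_eq :
              ∑ l ∈ Finset.range m', W (Function.update k' m' (M+1+1) l) *
                (μm (Function.update k' m' (M+1+1) (l+1)) -
                  μm (Function.update k' m' (M+1+1) l)) ^ r =
              ∑ l ∈ Finset.range m', W (k' l) *
                (Function.update μm (M+1) (τ (M+1+1)) (k' (l+1)) -
                  Function.update μm (M+1) (τ (M+1+1)) (k' l)) ^ r := by
            refine Finset.sum_congr rfl ?_
            intro l hl
            have hl' : l < m' := Finset.mem_range.mp hl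
            rw [Function.update_of_ne (by omega : l ≠ m') _ _]
            rw [hμ'e (k' l) (by have := hkub l hl'; omega)]
            rcases Nat.lt_or_ge (l+1) m' with h | h
            · rw [Function.update_of_ne (by omega : l + 1 ≠ m') _ _,
                hμ'e (k' (l+1)) (by have := hkub (l+1) h; omega)]
            · obtain hl1 : l + 1 = m' := by omega
              rw [hl1, Function.update_self, hkm, hμ's, hμn]
          rw [hsum_eq]
          refine le_trans hsum ?_
          -- budget comparison
          have hbud' : ∑ j ∈ Finset.range (M+1), W j *
              (Function.update τ (M+1) (τ (M+1+1)) (j+1) -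
                Function.update τ (M+1) (τ (M+1+1)) j) ^ r =
              (∑ j ∈ Finset.range M, W j * (τ (j+1) - τ j) ^ r)
                + W M * (τ (M+1+1) - τ M) ^ r := by
            rw [Finset.sum_range_succ]
            congr 1
            · refine Finset.sum_congr rfl ?_
              intro j hj
              have hj' : j < M := Finset.mem_range.mp hj
              rw [hτ'e j (by omega), hτ'e (j+1) (by omega)]
            · rw [hτ's, hτ'e M (by omega)]
          rw [hbud', Finset.sum_range_succ, Finset.sum_range_succ]
          linarith [hcase]
      · -- branch (ii): keep the last level
        push_neg at hcase
        have hWlt : W (M+1) < W M := by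
          by_contra hcon
          push_neg at hcon
          have hsub : (τ (M+1+1) - τ M) ^ r ≤
              (τ (M+1) - τ M) ^ r + (τ (M+1+1) - τ (M+1)) ^ r := by
            have he : τ (M+1+1) - τ M = (τ (M+1) - τ M) + (τ (M+1+1) - τ (M+1)) := by ring
            rw [he]
            exact rpow_subadd hr0.le hr1 (by linarith) (by linarith)
          have h1 : W M * (τ (M+1+1) - τ M) ^ r ≤
              W M * ((τ (M+1) - τ M) ^ r + (τ (M+1+1) - τ (M+1)) ^ r) :=
            mul_le_mul_of_nonneg_left hsub (hW0 M (by omega))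
          have h2 : W M * (τ (M+1+1) - τ (M+1)) ^ r ≤ W (M+1) * (τ (M+1+1) - τ (M+1)) ^ r :=
            mul_le_mul_of_nonneg_right hcon (Real.rpow_nonneg (by linarith) r)
          nlinarith
        have hAx : τ M ≤ μm (M+1) := hH5 M (M+1) (by omega) (by omega) hWlt
        have hxB : μm (M+1) ≤ τ (M+1) := hμτ (M+1) (by omega)
        have hτ''e : ∀ j, j ≠ M + 1 → Function.update τ (M+1) (μm (M+1)) j = τ j :=
          fun j hj => Function.update_of_ne hj _ _
        have hτ''s : Function.update τ (M+1) (μm (M+1)) (M+1) = μm (M+1) :=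
          Function.update_self _ _ _
        obtain ⟨m'', k'', hm'', hk0, hkm, hkinc, hsum⟩ :=
          ih (by omega) W (Function.update τ (M+1) (μm (M+1))) μm
            (fun i j hij hj => hW i j hij (by omega))
            (fun j hj => hW0 j (by omega))
            (by rw [hτ''e 0 (by omega)]; exact hτ0)
            (by
              intro j hj
              rcases Nat.lt_or_ge j M with h | h
              · rw [hτ''e j (by omega), hτ''e (j+1) (by omega)]
                exact hτm j (by omega)
              · obtain rfl : j = M := by omega
                rw [hτ''e j (by omega), hτ''s]
                exact hAx)
            (by
              intro j hj
              rw [hτ''e j (by omega)]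
              exact hμτ j (by omega))
            (fun j hj => hμ0 j (by omega))
            (fun j hj => hμm j (by omega))
            (by rw [hτ''s])
            (by
              intro i j hij hj hWij
              rw [hτ''e i (by omega)]
              exact hH5 i j hij (by omega) hWij)
        refine ⟨m'' + 1, Function.update k'' (m''+1) (M+1+1), by omega, ?_,
          Function.update_self _ _ _, ?_, ?_⟩
        · rw [Function.update_of_ne (by omega) _ _]; exact hk0
        · intro l hl
          rcases Nat.lt_or_ge l m'' with h | h
          · rw [Function.update_of_ne (by omega : l ≠ m'' + 1) _ _,
              Function.update_of_ne (by omega : l + 1 ≠ m'' + 1) _ _]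
            exact hkinc l h
          · obtain rfl : l = m'' := by omega
            rw [Function.update_of_ne (by omega : l ≠ l + 1) _ _, Function.update_self, hkm]
            omega
        · have hstep : ∑ l ∈ Finset.range (m''+1), W (Function.update k'' (m''+1) (M+1+1) l) *
              (μm (Function.update k'' (m''+1) (M+1+1) (l+1)) -
                μm (Function.update k'' (m''+1) (M+1+1) l)) ^ r =
              (∑ l ∈ Finset.range m'', W (k'' l) * (μm (k'' (l+1)) - μm (k'' l)) ^ r)
                + W (M+1) * (τ (M+1+1) - μm (M+1)) ^ r := by
            rw [Finset.sum_range_succ]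
            congr 1
            · refine Finset.sum_congr rfl ?_
              intro l hl
              have hl' : l < m'' := Finset.mem_range.mp hl
              rw [Function.update_of_ne (by omega : l ≠ m'' + 1) _ _,
                Function.update_of_ne (by omega : l + 1 ≠ m'' + 1) _ _]
            · rw [Function.update_of_ne (by omega : m'' ≠ m'' + 1) _ _,
                Function.update_self, hkm, hμn]
          rw [hstep]
          have hbud'' : ∑ j ∈ Finset.range (M+1), W j *
              (Function.update τ (M+1) (μm (M+1)) (j+1) -
                Function.update τ (M+1) (μm (M+1)) j) ^ r =
              (∑ j ∈ Finset.range M, W j * (τ (j+1) - τ j) ^ r)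
                + W M * (μm (M+1) - τ M) ^ r := by
            rw [Finset.sum_range_succ]
            congr 1
            · refine Finset.sum_congr rfl ?_
              intro j hj
              have hj' : j < M := Finset.mem_range.mp hj
              rw [hτ''e j (by omega), hτ''e (j+1) (by omega)]
            · rw [hτ''s, hτ''e M (by omega)]
          rw [hbud''] at hsum
          have hψ := psi_le hr0 hr1 (hW0 (M+1) (by omega)) hWlt.le hAx hxB hBCle hcase
          rw [Finset.sum_range_succ, Finset.sum_range_succ]
          linarith [hsum, hψ]

section DecLemmas

variable {Ω : Type*} [MeasurableSpace Ω] (μ : Measure Ω) (f : Ω → ℝ)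

private lemma decRearr_le_sup {E : Set Ω} (hE : MeasurableSet E) {t : ℝ}
    (ht : μ E ≤ ENNReal.ofReal t) :
    decRearr μ f t ≤ ⨆ x ∈ Eᶜ, ENNReal.ofReal |f x| := by
  exact iInf_le_of_le E (iInf_le_of_le hE (iInf_le_of_le ht le_rfl))

private lemma decRearr_anti {t t' : ℝ} (h : t ≤ t') : decRearr μ f t' ≤ decRearr μ f t := by
  refine le_iInf fun E => le_iInf fun hE => le_iInf fun hb => ?_
  exact decRearr_le_sup μ f hE (le_trans hb (ENNReal.ofReal_le_ofReal h))

private lemma measure_gt_le {t : ℝ} {s : ℝ≥0∞} (hs : decRearr μ f t < s) :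
    μ {x | s < ENNReal.ofReal |f x|} ≤ ENNReal.ofReal t := by
  rw [decRearr] at hs
  obtain ⟨E, hE⟩ := iInf_lt_iff.mp hs
  obtain ⟨hEm, hE2⟩ := iInf_lt_iff.mp hE
  obtain ⟨hEb, hlt⟩ := iInf_lt_iff.mp hE2
  refine le_trans (measure_mono ?_) hEb
  intro x hx
  by_contra hxE
  have h1 : ENNReal.ofReal |f x| ≤ ⨆ y ∈ Eᶜ, ENNReal.ofReal |f y| :=
    le_biSup (fun y => ENNReal.ofReal |f y|) (show x ∈ Eᶜ from hxE)
  exact absurd (lt_of_lt_of_le hx (le_trans h1 hlt.le)) (lt_irrefl s)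

private lemma measure_gt_decRearr_le {t : ℝ} (hfin : decRearr μ f t ≠ ⊤) :
    μ {x | decRearr μ f t < ENNReal.ofReal |f x|} ≤ ENNReal.ofReal t := by
  set v := decRearr μ f t with hv
  have hseq : {x | v < ENNReal.ofReal |f x|} =
      ⋃ i : ℕ, {x | v + (i : ℝ≥0∞)⁻¹ < ENNReal.ofReal |f x|} := by
    ext x
    simp only [mem_setOf_eq, mem_iUnion]
    constructor
    · intro hx
      have hpos : ENNReal.ofReal |f x| - v ≠ 0 := (ne_of_gt (tsub_pos_of_lt hx))
      obtain ⟨i, hi⟩ := ENNReal.exists_inv_nat_lt hpos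
      refine ⟨i, ?_⟩
      have h2 : v + (i : ℝ≥0∞)⁻¹ < v + (ENNReal.ofReal |f x| - v) :=
        ENNReal.add_lt_add_left hfin hi
      rwa [add_tsub_cancel_of_le hx.le] at h2
    · rintro ⟨i, hi⟩
      refine lt_of_le_of_lt ?_ hi
      exact le_add_right le_rfl
  rw [hseq]
  have hmono : Monotone fun i : ℕ => {x | v + (i : ℝ≥0∞)⁻¹ < ENNReal.ofReal |f x|} := by
    intro i j hij x hx
    simp only [mem_setOf_eq] at hx ⊢
    refine lt_of_le_of_lt (add_le_add (le_refl v) ?_) hx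
    exact ENNReal.inv_le_inv.mpr (by exact_mod_cast hij)
  rw [Directed.measure_iUnion hmono.directed_le]
  refine iSup_le fun i => ?_
  refine measure_gt_le μ f ?_
  refine ENNReal.lt_add_right hfin ?_
  simp

private lemma decRearr_le_of_measure_le (hf : Measurable f) {w : ℝ≥0∞} {t : ℝ}
    (hw : μ {x | w < ENNReal.ofReal |f x|} ≤ ENNReal.ofReal t) :
    decRearr μ f t ≤ w := by
  have hmeas : MeasurableSet {x | w < ENNReal.ofReal |f x|} :=
    measurableSet_lt measurable_const hf.abs.ennreal_ofReal
  refine le_trans (decRearr_le_sup μ f hmeas hw) ?_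
  refine iSup₂_le fun x hx => ?_
  simpa using hx

end DecLemmas


private lemma dir2 {Ω : Type*} [MeasurableSpace Ω]
    (p q : ℝ) (hq : 0 < q) (hqp : q < p) (hp : 0 < p)
    (μ : Measure Ω) [IsFiniteMeasure μ] (f : Ω → ℝ) (hf : Measurable f)
    (n : ℕ) (τ : Fin (n + 1) → ℝ) (h0 : τ 0 = 0) (hsm : StrictMono τ)
    (hlast : τ (Fin.last n) = (μ univ).toReal) :
    LambdaInf μ p q f ≤
      (∑ j : Fin n, decRearr μ f (τ j.castSucc) ^ q *
        ENNReal.ofReal (τ j.succ - τ j.castSucc) ^ (q / p)) ^ (1 / q) := by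
  have hp0 : 0 < p := hp
  set r := q / p with hrdef
  have hr0 : 0 < r := div_pos hq hp0
  have hr1 : r < 1 := (div_lt_one hp0).mpr hqp
  have hq1 : (0:ℝ) ≤ 1 / q := by positivity
  by_cases hinf : ∀ j : Fin n, decRearr μ f (τ j.castSucc) ≠ ⊤
  swap
  · -- some value is infinite: RHS is ⊤
    push_neg at hinf
    obtain ⟨j, hj⟩ := hinf
    have hΔ : 0 < τ j.succ - τ j.castSucc := by
      have := hsm (Fin.castSucc_lt_succ (i := j))
      linarith
    have hterm : decRearr μ f (τ j.castSucc) ^ q *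
        ENNReal.ofReal (τ j.succ - τ j.castSucc) ^ r = ⊤ := by
      rw [hj, ENNReal.top_rpow_of_pos hq, ENNReal.top_mul]
      refine ne_of_gt (ENNReal.rpow_pos ?_ ?_)
      · exact ENNReal.ofReal_pos.mpr hΔ
      · exact ENNReal.ofReal_ne_top
    have hsum : ∑ j : Fin n, decRearr μ f (τ j.castSucc) ^ q *
        ENNReal.ofReal (τ j.succ - τ j.castSucc) ^ r = ⊤ := by
      rw [eq_top_iff]
      refine le_trans (le_of_eq hterm.symm) ?_
      exact Finset.single_le_sum
        (f := fun j : Fin n => decRearr μ f (τ j.castSucc) ^ q *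
          ENNReal.ofReal (τ j.succ - τ j.castSucc) ^ r)
        (fun i _ => zero_le) (Finset.mem_univ j)
    rw [hsum, ENNReal.top_rpow_of_pos (by positivity)]
    exact le_top
  by_cases hn : n = 0
  · -- empty: total measure zero
    subst hn
    have hμ0 : μ univ = 0 := by
      have h1 : (μ univ).toReal = 0 := by
        rw [← hlast]
        have : Fin.last 0 = 0 := rfl
        rw [this, h0]
      have h2 := measure_ne_top μ univ
      exact (ENNReal.toReal_eq_zero_iff _).mp h1 |>.resolve_right h2
    have hpart : IsBorelPartition (fun _ : Fin 1 => (univ : Set Ω)) :=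
      ⟨fun _ => MeasurableSet.univ, Subsingleton.pairwise, iUnion_const _⟩
    have hval : LambdaInf μ p q f ≤ 0 := by
      unfold LambdaInf
      refine iInf_le_of_le 1 (iInf_le_of_le (fun _ => univ) (iInf_le_of_le hpart ?_))
      have : ∑ i : Fin 1, (⨆ x ∈ (univ : Set Ω), ENNReal.ofReal |f x|) ^ q *
          μ (univ : Set Ω) ^ (q / p) = 0 := by
        rw [Finset.sum_const, hμ0]
        rw [ENNReal.zero_rpow_of_pos (by rw [← hrdef]; exact hr0), mul_zero, smul_zero]
      rw [this, ENNReal.zero_rpow_of_pos (by positivity)]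
    exact le_trans hval (zero_le)
  have hn1 : 1 ≤ n := Nat.one_le_iff_ne_zero.mpr hn
  -- ℕ-indexed versions
  set tN : ℕ → ℝ := fun j => τ ⟨min j n, Nat.lt_succ_of_le (min_le_right j n)⟩ with htNdef
  have htN_mono : Monotone tN := by
    intro i j hij
    exact hsm.monotone (by simp only [Fin.mk_le_mk]; omega)
  have htN0 : tN 0 = 0 := by
    have he : tN 0 = τ 0 := congrArg τ (Fin.ext (by simp only [Fin.val_zero]; omega))
    rw [he]; exact h0
  have htNlast : tN n = (μ univ).toReal := by
    have he : tN n = τ (Fin.last n) := congrArg τ (Fin.ext (by simp only [Fin.val_last]; omega))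
    rw [he]; exact hlast
  have htNnn : ∀ j, 0 ≤ tN j := by
    intro j
    rw [← htN0]
    exact htN_mono (Nat.zero_le j)
  set v : ℕ → ℝ≥0∞ := fun j => decRearr μ f (tN j) with hvdef
  have htcast : ∀ (j : ℕ) (hj : j < n), tN j = τ (Fin.castSucc ⟨j, hj⟩) :=
    fun j hj => congrArg τ (Fin.ext (by simp only [Fin.coe_castSucc]; omega))
  have htsucc : ∀ (j : ℕ) (hj : j < n), tN (j+1) = τ (Fin.succ ⟨j, hj⟩) :=
    fun j hj => congrArg τ (Fin.ext (by simp only [Fin.val_succ]; omega))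
  have hvfin : ∀ j, j < n → v j ≠ ⊤ := by
    intro j hj
    simp only [hvdef]
    rw [htcast j hj]
    exact hinf ⟨j, hj⟩
  have hv_anti : ∀ i j : ℕ, i ≤ j → v j ≤ v i := by
    intro i j h
    exact decRearr_anti μ f (htN_mono h)
  set W : ℕ → ℝ := fun j => (v j).toReal ^ q with hWdef
  set μN : ℕ → ℝ := fun j =>
    if j < n then (μ {x | v j < ENNReal.ofReal |f x|}).toReal else (μ univ).toReal with hμNdef
  have hWanti : ∀ i j : ℕ, i ≤ j → j < n → W j ≤ W i := by
    intro i j hij hj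
    refine Real.rpow_le_rpow ENNReal.toReal_nonneg ?_ hq.le
    exact (ENNReal.toReal_le_toReal (hvfin j hj) (hvfin i (by omega))).mpr (hv_anti i j hij)
  have hW0 : ∀ j, j < n → 0 ≤ W j := fun j _ => Real.rpow_nonneg ENNReal.toReal_nonneg q
  have hμτ : ∀ j, j < n → μN j ≤ tN j := by
    intro j hj
    simp only [hμNdef]
    rw [if_pos hj]
    have h1 : μ {x | v j < ENNReal.ofReal |f x|} ≤ ENNReal.ofReal (tN j) :=
      measure_gt_decRearr_le μ f (hvfin j hj)
    have h2 := ENNReal.toReal_mono ENNReal.ofReal_ne_top h1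
    rwa [ENNReal.toReal_ofReal (htNnn j)] at h2
  have hμ0 : ∀ j, j ≤ n → 0 ≤ μN j := by
    intro j _
    simp only [hμNdef]
    split <;> exact ENNReal.toReal_nonneg
  have hμmono : ∀ j, j < n → μN j ≤ μN (j+1) := by
    intro j hj
    simp only [hμNdef]
    rw [if_pos hj]
    rcases Nat.lt_or_ge (j+1) n with h | h
    · rw [if_pos h]
      refine ENNReal.toReal_mono (measure_ne_top μ _) (measure_mono ?_)
      intro x hx
      exact lt_of_le_of_lt (hv_anti j (j+1) (by omega)) hx
    · rw [if_neg (by omega : ¬ (j+1 < n))]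
      exact ENNReal.toReal_mono (measure_ne_top μ _) (measure_mono (subset_univ _))
  have hμn : μN n = tN n := by
    simp only [hμNdef]
    rw [if_neg (lt_irrefl n)]
    exact htNlast.symm
  have hH5 : ∀ i j : ℕ, i < j → j < n → W j < W i → tN i ≤ μN j := by
    intro i j hij hj hWij
    have hvij : v j < v i := by
      by_contra hc
      push_neg at hc
      have : W i ≤ W j := by
        refine Real.rpow_le_rpow ENNReal.toReal_nonneg ?_ hq.le
        exact (ENNReal.toReal_le_toReal (hvfin i (by omega)) (hvfin j hj)).mpr hc
      exact absurd hWij (not_lt.mpr this)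
    have hkey : ENNReal.ofReal (tN i) ≤ μ {x | v j < ENNReal.ofReal |f x|} := by
      by_contra hc
      push_neg at hc
      have h1 : decRearr μ f (tN i) ≤ v j := decRearr_le_of_measure_le μ f hf hc.le
      exact absurd (lt_of_lt_of_le hvij h1) (lt_irrefl _)
    have h2 := ENNReal.toReal_mono (measure_ne_top μ _) hkey
    rw [ENNReal.toReal_ofReal (htNnn i)] at h2
    simp only [hμNdef]
    rw [if_pos hj]
    exact h2
  obtain ⟨m, k, hm1, hk0, hkm, hkinc, hsumnum⟩ :=
    num hr0 hr1.le n hn1 W tN μN hWanti hW0 htN0 (fun j _ => htN_mono (by omega))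
      hμτ hμ0 hμmono hμn hH5
  have hkle : ∀ l1 l2 : ℕ, l1 ≤ l2 → l2 ≤ m → k l1 ≤ k l2 :=
    chain_mono (fun j hj => (hkinc j hj).le)
  have hklt : ∀ l, l < m → k l < n := by
    intro l hl
    have h1 := hkinc l hl
    have h2 := hkle (l+1) m (by omega) le_rfl
    omega
  have hkn : ∀ l, l ≤ m → k l ≤ n := by
    intro l hl
    rcases Nat.lt_or_ge l m with h | h
    · exact (hklt l h).le
    · have : l = m := by omega
      rw [this, hkm]
  -- the partition
  set E : ℕ → Set Ω := fun l => {x | v (k l) < ENNReal.ofReal |f x|} with hEdef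
  set E'' : ℕ → Set Ω := fun l => if l = 0 then ∅ else if l ≤ m then E (l-1) else univ
    with hE''def
  have hEmeas : ∀ l, MeasurableSet (E l) := fun l =>
    measurableSet_lt measurable_const hf.abs.ennreal_ofReal
  have hE''meas : ∀ l, MeasurableSet (E'' l) := by
    intro l
    simp only [hE''def]
    split
    · exact MeasurableSet.empty
    split
    · exact hEmeas _
    · exact MeasurableSet.univ
  have hE''mono : ∀ l1 l2 : ℕ, l1 ≤ l2 → E'' l1 ⊆ E'' l2 := by
    intro l1 l2 h
    rw [hE''def]
    simp only []
    split
    · exact empty_subset _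
    rename_i h1
    have hl1 : 1 ≤ l1 := Nat.one_le_iff_ne_zero.mpr h1
    split
    · rename_i h2
      have h2' : ¬ l2 = 0 := by omega
      rw [if_neg h2']
      rcases Nat.lt_or_ge m l2 with h3 | h3
      · rw [if_neg (by omega)]
        exact subset_univ _
      · rw [if_pos (by omega)]
        intro x hx
        simp only [hEdef, mem_setOf_eq] at hx ⊢
        refine lt_of_le_of_lt ?_ hx
        exact hv_anti _ _ (hkle (l1-1) (l2-1) (by omega) (by omega))
    · rename_i h2
      rw [if_neg (by omega), if_neg (by omega)]
  set P : Fin (m+1) → Set Ω := fun i => E'' (i.val+1) \ E'' i.val with hPdef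
  have hPmeas : ∀ i, MeasurableSet (P i) := fun i => (hE''meas _).diff (hE''meas _)
  have hPdisj : Pairwise (Function.onFun Disjoint P) := by
    have hasym : ∀ i j : Fin (m+1), i < j → Disjoint (P i) (P j) := by
      intro i j hij
      rw [Set.disjoint_left]
      intro x hxi hxj
      have h1 : x ∈ E'' (i.val + 1) := hxi.1
      have h2 : x ∈ E'' j.val := hE''mono _ _ (by exact hij) h1
      exact hxj.2 h2
    intro i j hne
    rcases lt_or_gt_of_ne hne with h | h
    · exact hasym i j h
    · exact (hasym j i h).symm
  have hE''top : E'' (m+1) = univ := by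
    rw [hE''def]
    simp only [Nat.succ_ne_zero, if_false]
    rw [if_neg (by omega)]
  have hPunion : (⋃ i, P i) = univ := by
    ext x
    simp only [mem_iUnion, mem_univ, iff_true]
    classical
    have hex : ∃ l, x ∈ E'' (l+1) := ⟨m, by rw [hE''top]; exact mem_univ x⟩
    have hl0m : Nat.find hex ≤ m := by
      by_contra hc
      push_neg at hc
      exact absurd (Nat.find_min hex (show m < Nat.find hex from hc)) (by
        simp only [not_not]
        rw [hE''top]; exact mem_univ x)
    refine ⟨⟨Nat.find hex, by omega⟩, ?_, ?_⟩
    · show x ∈ E'' (Nat.find hex + 1)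
      exact Nat.find_spec hex
    show x ∉ E'' (Nat.find hex)
    rcases Nat.eq_zero_or_pos (Nat.find hex) with h | h
    · rw [h]
      simp [hE''def]
    · intro hc
      have hmin := Nat.find_min hex (show Nat.find hex - 1 < Nat.find hex by omega)
      rw [show Nat.find hex - 1 + 1 = Nat.find hex by omega] at hmin
      exact hmin hc
  have hPart : IsBorelPartition P := ⟨hPmeas, hPdisj, hPunion⟩
  -- bound the partition value
  have hE''succ : ∀ l : ℕ, l < m → E'' (l+1) = E l := by
    intro l hl
    simp only [hE''def, Nat.succ_ne_zero, if_false, if_neg (Nat.succ_ne_zero l),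
      if_pos (by omega : l + 1 ≤ m), Nat.add_sub_cancel]
  have hμNmono : ∀ a b : ℕ, a ≤ b → b ≤ n → μN a ≤ μN b := chain_mono hμmono
  have hE''eq : ∀ l : ℕ, l ≤ m → μ (E'' (l+1)) = ENNReal.ofReal (μN (k l)) := by
    intro l hl
    rcases Nat.lt_or_ge l m with h | h
    · rw [hE''succ l h]
      simp only [hμNdef, if_pos (hklt l h), hEdef]
      exact (ENNReal.ofReal_toReal (measure_ne_top μ _)).symm
    · have hlm : l = m := by omega
      subst hlm
      rw [hE''top, hkm]
      simp only [hμNdef, if_neg (lt_irrefl n)]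
      exact (ENNReal.ofReal_toReal (measure_ne_top μ _)).symm
  have hμP0 : μ (P 0) = 0 := by
    have hsub : P 0 ⊆ E 0 := by
      intro x hx
      have h1 : x ∈ E'' (0+1) := hx.1
      rwa [hE''succ 0 (by omega)] at h1
    refine le_antisymm (le_trans (measure_mono hsub) ?_) (zero_le)
    have h2 : μ {x | v (k 0) < ENNReal.ofReal |f x|} ≤ ENNReal.ofReal (tN (k 0)) :=
      measure_gt_decRearr_le μ f (hvfin (k 0) (by rw [hk0]; omega))
    simp only [hEdef]
    refine le_trans h2 ?_
    rw [hk0, htN0]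
    simp
  have hterm0 : (⨆ x ∈ P 0, ENNReal.ofReal |f x|) ^ q * μ (P 0) ^ (q / p) = 0 := by
    rw [hμP0, ENNReal.zero_rpow_of_pos hr0, mul_zero]
  have hPsucc : ∀ i : Fin m,
      (⨆ x ∈ P i.succ, ENNReal.ofReal |f x|) ^ q * μ (P i.succ) ^ (q / p) ≤
      ENNReal.ofReal (W (k i.val) * (μN (k (i.val+1)) - μN (k i.val)) ^ (q / p)) := by
    intro i
    have hiv : i.val < m := i.isLt
    have hsup : (⨆ x ∈ P i.succ, ENNReal.ofReal |f x|) ≤ v (k i.val) := by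
      refine iSup₂_le fun x hx => ?_
      simp only [hPdef] at hx
      have h2 : x ∉ E'' (i.val + 1) := by
        have h := hx.2
        rwa [show (i.succ.val) = i.val + 1 from Fin.val_succ i] at h
      rw [hE''succ i.val (by omega)] at h2
      simp only [hEdef, mem_setOf_eq, not_lt] at h2
      exact h2
    have hμdiffnn : μN (k i.val) ≤ μN (k (i.val + 1)) :=
      hμNmono _ _ (hkinc i.val hiv).le (hkn _ (by omega))
    have hμdiff : μ (P i.succ) = ENNReal.ofReal (μN (k (i.val+1)) - μN (k i.val)) := by
      have hPs : P i.succ = E'' (i.val+1+1) \ E'' (i.val+1) := by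
        simp only [hPdef, Fin.val_succ]
      rw [hPs, measure_diff (hE''mono _ _ (by omega)) (hE''meas _).nullMeasurableSet
        (measure_ne_top μ _)]
      rw [hE''eq (i.val+1) (by omega), hE''eq i.val (by omega)]
      rw [ENNReal.ofReal_sub _ (hμ0 (k i.val) (hkn _ (by omega)))]
    calc (⨆ x ∈ P i.succ, ENNReal.ofReal |f x|) ^ q * μ (P i.succ) ^ (q / p)
        ≤ v (k i.val) ^ q * μ (P i.succ) ^ (q / p) :=
          mul_le_mul_left (ENNReal.rpow_le_rpow hsup hq.le) _
      _ = ENNReal.ofReal (W (k i.val)) *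
          ENNReal.ofReal ((μN (k (i.val+1)) - μN (k i.val)) ^ (q / p)) := by
          rw [hμdiff]
          congr 1
          · rw [← ENNReal.ofReal_toReal (hvfin (k i.val) (hklt _ hiv)),
              ENNReal.ofReal_rpow_of_nonneg ENNReal.toReal_nonneg hq.le]
          · rw [ENNReal.ofReal_rpow_of_nonneg (sub_nonneg.mpr hμdiffnn) hr0.le]
      _ = ENNReal.ofReal (W (k i.val) * (μN (k (i.val+1)) - μN (k i.val)) ^ (q / p)) :=
          (ENNReal.ofReal_mul (hW0 _ (hklt _ hiv))).symm
  have hsum1 : ∑ i : Fin (m+1), (⨆ x ∈ P i, ENNReal.ofReal |f x|) ^ q * μ (P i) ^ (q / p) ≤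
      ENNReal.ofReal (∑ l ∈ Finset.range m, W (k l) * (μN (k (l+1)) - μN (k l)) ^ (q / p)) := by
    rw [Fin.sum_univ_succ, hterm0, zero_add]
    calc ∑ i : Fin m, (⨆ x ∈ P i.succ, ENNReal.ofReal |f x|) ^ q * μ (P i.succ) ^ (q / p)
        ≤ ∑ i : Fin m,
            ENNReal.ofReal (W (k i.val) * (μN (k (i.val+1)) - μN (k i.val)) ^ (q / p)) :=
          Finset.sum_le_sum fun i _ => hPsucc i
      _ = ∑ l ∈ Finset.range m,
            ENNReal.ofReal (W (k l) * (μN (k (l+1)) - μN (k l)) ^ (q / p)) :=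
          Fin.sum_univ_eq_sum_range
            (fun l => ENNReal.ofReal (W (k l) * (μN (k (l+1)) - μN (k l)) ^ (q / p))) m
      _ = ENNReal.ofReal
            (∑ l ∈ Finset.range m, W (k l) * (μN (k (l+1)) - μN (k l)) ^ (q / p)) := by
          rw [ENNReal.ofReal_sum_of_nonneg]
          intro l hl
          have hlm : l < m := Finset.mem_range.mp hl
          exact mul_nonneg (hW0 _ (hklt l hlm))
            (Real.rpow_nonneg (sub_nonneg.mpr
              (hμNmono _ _ (hkinc l hlm).le (hkn _ (by omega)))) _)
  have hbudget : ENNReal.ofReal (∑ j ∈ Finset.range n, W j * (tN (j+1) - tN j) ^ (q / p)) =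
      ∑ j : Fin n, decRearr μ f (τ j.castSucc) ^ q *
        ENNReal.ofReal (τ j.succ - τ j.castSucc) ^ (q / p) := by
    rw [ENNReal.ofReal_sum_of_nonneg (fun j hj =>
      mul_nonneg (hW0 j (Finset.mem_range.mp hj))
        (Real.rpow_nonneg (sub_nonneg.mpr (htN_mono (by omega))) _))]
    rw [← Fin.sum_univ_eq_sum_range
      (fun j => ENNReal.ofReal (W j * (tN (j+1) - tN j) ^ (q / p))) n]
    refine Finset.sum_congr rfl fun j _ => ?_
    have hvj : v j.val = decRearr μ f (τ j.castSucc) := by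
      simp only [hvdef]
      rw [htcast j.val j.isLt]
    rw [ENNReal.ofReal_mul (hW0 j.val j.isLt)]
    congr 1
    · simp only [hWdef]
      rw [← ENNReal.ofReal_rpow_of_nonneg ENNReal.toReal_nonneg hq.le,
        ENNReal.ofReal_toReal (hvfin j.val j.isLt), hvj]
    · rw [← ENNReal.ofReal_rpow_of_nonneg (sub_nonneg.mpr (htN_mono (by omega))) hr0.le]
      rw [htsucc j.val j.isLt, htcast j.val j.isLt]
  have hval : LambdaInf μ p q f ≤
      (∑ i : Fin (m+1), (⨆ x ∈ P i, ENNReal.ofReal |f x|) ^ q * μ (P i) ^ (q / p)) ^ (1/q) := by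
    unfold LambdaInf
    exact iInf_le_of_le (m+1) (iInf_le_of_le P (iInf_le_of_le hPart le_rfl))
  refine le_trans hval (ENNReal.rpow_le_rpow ?_ hq1)
  refine le_trans hsum1 ?_
  rw [← hbudget]
  exact ENNReal.ofReal_le_ofReal hsumnum

private lemma dir1 {Ω : Type*} [MeasurableSpace Ω]
    (p q : ℝ) (hq : 0 < q) (hqp : q < p) (hp : 0 < p)
    (μ : Measure Ω) [IsFiniteMeasure μ] (f : Ω → ℝ)
    (n : ℕ) (A : Fin n → Set Ω) (hA : IsBorelPartition A) :
    (⨅ (n' : ℕ) (τ : Fin (n' + 1) → ℝ) (_ : τ 0 = 0) (_ : StrictMono τ)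
        (_ : τ (Fin.last n') = (μ univ).toReal),
        (∑ j : Fin n', decRearr μ f (τ j.castSucc) ^ q *
          ENNReal.ofReal (τ j.succ - τ j.castSucc) ^ (q / p)) ^ (1 / q)) ≤
      (∑ i, (⨆ x ∈ A i, ENNReal.ofReal |f x|) ^ q * μ (A i) ^ (q / p)) ^ (1 / q) := by
  have hr0 : 0 < q / p := div_pos hq hp
  classical
  set σ : Fin n → ℝ≥0∞ := fun i => ⨆ x ∈ A i, ENNReal.ofReal |f x| with hσdef
  set e : Equiv.Perm (Fin n) := Fin.revPerm.trans (Tuple.sort σ) with hedef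
  have hσanti : ∀ i j : Fin n, i ≤ j → σ (e j) ≤ σ (e i) := by
    intro i j hij
    have h1 := Tuple.monotone_sort σ (Fin.rev_le_rev.mpr hij)
    simpa [hedef, Function.comp] using h1
  -- ℕ-indexed pieces
  set BN : ℕ → Set Ω := fun i => if h : i < n then A (e ⟨i, h⟩) else ∅ with hBNdef
  set MB : ℕ → ℝ≥0∞ := fun i => μ (BN i) with hMBdef
  have hMBfin : ∀ i, MB i ≠ ⊤ := fun i => measure_ne_top μ _
  have hBNmeas : ∀ i, MeasurableSet (BN i) := by
    intro i
    simp only [hBNdef]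
    split
    · exact hA.1 _
    · exact MeasurableSet.empty
  have hBNdisj : ∀ i j : ℕ, i ≠ j → Disjoint (BN i) (BN j) := by
    intro i j hij
    simp only [hBNdef]
    split
    · split
      · refine hA.2.1 ?_
        intro hc
        rename_i h1 h2
        have := e.injective hc
        simp only [Fin.mk.injEq] at this
        exact hij this
      · exact disjoint_empty _
    · exact empty_disjoint _
  have hcov : ∀ x : Ω, ∃ i : ℕ, i < n ∧ x ∈ BN i := by
    intro x
    have h1 : x ∈ ⋃ i, A i := by rw [hA.2.2]; exact mem_univ x
    obtain ⟨i, hi⟩ := mem_iUnion.mp h1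
    refine ⟨(e.symm i).val, (e.symm i).isLt, ?_⟩
    simp only [hBNdef]
    rw [dif_pos (e.symm i).isLt]
    have : (⟨(e.symm i).val, (e.symm i).isLt⟩ : Fin n) = e.symm i := rfl
    rw [this, Equiv.apply_symm_apply]
    exact hi
  -- cumulative sums
  set c : ℕ → ℝ := fun k0 => (∑ i ∈ Finset.range k0, MB i).toReal with hcdef
  have hsumfin : ∀ k0 : ℕ, (∑ i ∈ Finset.range k0, MB i) ≠ ⊤ := by
    intro k0
    rw [ENNReal.sum_ne_top]
    exact fun i _ => hMBfin i
  have hcmono : Monotone c := by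
    intro k1 k2 h
    simp only [hcdef]
    refine ENNReal.toReal_mono (hsumfin k2) ?_
    exact Finset.sum_le_sum_of_subset (Finset.range_subset_range.mpr h)
  have hc0 : c 0 = 0 := by simp [hcdef]
  have hstep : ∀ k0 : ℕ, c (k0+1) = c k0 + (MB k0).toReal := by
    intro k0
    simp only [hcdef, Finset.sum_range_succ]
    rw [ENNReal.toReal_add (hsumfin k0) (hMBfin k0)]
  have hcnn : ∀ k0, 0 ≤ c k0 := fun k0 => ENNReal.toReal_nonneg
  have hmeasE : ∀ k0 : ℕ, μ (⋃ i ∈ Finset.range k0, BN i) = ∑ i ∈ Finset.range k0, MB i := by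
    intro k0
    rw [measure_biUnion_finset ?_ (fun i _ => hBNmeas i)]
    intro i _ j _ hij
    exact hBNdisj i j hij
  have hctot : c n = (μ univ).toReal := by
    simp only [hcdef]
    congr 1
    rw [← hmeasE n]
    congr 1
    refine eq_univ_of_forall fun x => ?_
    obtain ⟨i, hin, hxi⟩ := hcov x
    exact mem_biUnion (Finset.mem_range.mpr hin) hxi
  -- decreasing rearrangement bound at cumulative points
  have hdec : ∀ (k0 : ℕ) (hk0 : k0 < n), decRearr μ f (c k0) ≤ σ (e ⟨k0, hk0⟩) := by
    intro k0 hk0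
    have hmeas : MeasurableSet (⋃ i ∈ Finset.range k0, BN i) :=
      Finset.measurableSet_biUnion _ (fun i _ => hBNmeas i)
    have hμE : μ (⋃ i ∈ Finset.range k0, BN i) ≤ ENNReal.ofReal (c k0) := by
      rw [hmeasE k0]
      simp only [hcdef]
      rw [ENNReal.ofReal_toReal (hsumfin k0)]
    refine le_trans (decRearr_le_sup μ f hmeas hμE) ?_
    refine iSup₂_le fun x hx => ?_
    obtain ⟨i, hin, hxi⟩ := hcov x
    have hik0 : k0 ≤ i := by
      by_contra hc'
      push_neg at hc'
      exact hx (mem_biUnion (Finset.mem_range.mpr hc') hxi)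
    have h1 : ENNReal.ofReal |f x| ≤ σ (e ⟨i, hin⟩) := by
      have hxA : x ∈ A (e ⟨i, hin⟩) := by
        have := hxi
        simp only [hBNdef] at this
        rwa [dif_pos hin] at this
      simp only [hσdef]
      exact le_biSup (fun y => ENNReal.ofReal |f y|) hxA
    exact le_trans h1 (hσanti ⟨k0, hk0⟩ ⟨i, hin⟩ hik0)
  -- the set of cumulative values
  set C : Finset ℝ := (Finset.range (n+1)).image c with hCdef
  have hC0 : (0:ℝ) ∈ C := by
    rw [hCdef]
    exact Finset.mem_image.mpr ⟨0, Finset.mem_range.mpr (by omega), hc0⟩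
  have hCcard : 1 ≤ C.card := Finset.card_pos.mpr ⟨0, hC0⟩
  have hCub : ∀ y ∈ C, 0 ≤ y ∧ y ≤ c n := by
    intro y hy
    rw [hCdef] at hy
    obtain ⟨k0, hk0, rfl⟩ := Finset.mem_image.mp hy
    have hk0' : k0 ≤ n := by
      have := Finset.mem_range.mp hk0
      omega
    exact ⟨hcnn k0, hcmono hk0'⟩
  have hCtop : c n ∈ C := by
    rw [hCdef]
    exact Finset.mem_image.mpr ⟨n, Finset.mem_range.mpr (by omega), rfl⟩
  set mC : ℕ := C.card - 1 with hmCdef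
  have hcast : mC + 1 = C.card := by omega
  set iso := C.orderIsoOfFin rfl with hisodef
  set τC : Fin (mC + 1) → ℝ := fun j => (iso (Fin.cast hcast j) : ℝ) with hτCdef
  have hτCmem : ∀ j, τC j ∈ C := fun j => (iso (Fin.cast hcast j)).2
  have hτCsm : StrictMono τC := by
    intro a b hab
    simp only [hτCdef]
    have h' : Fin.cast hcast a < Fin.cast hcast b := hab
    exact iso.strictMono h'
  have hτC0 : τC 0 = 0 := by
    obtain ⟨j0, hj0⟩ := iso.surjective ⟨0, hC0⟩
    refine le_antisymm ?_ (hCub _ (hτCmem 0)).1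
    have h1 : Fin.cast hcast 0 ≤ j0 := by
      simp [Fin.le_def]
    have h2 : τC 0 ≤ (iso j0 : ℝ) := by
      simp only [hτCdef]
      exact_mod_cast iso.monotone h1
    rw [hj0] at h2
    exact h2
  have hτClast : τC (Fin.last mC) = (μ univ).toReal := by
    rw [← hctot]
    obtain ⟨jn, hjn⟩ := iso.surjective ⟨c n, hCtop⟩
    refine le_antisymm (hCub _ (hτCmem _)).2 ?_
    have h1 : jn ≤ Fin.cast hcast (Fin.last mC) := by
      simp only [Fin.le_def, Fin.coe_cast, Fin.val_last]
      have := jn.isLt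
      omega
    have h2 : (iso jn : ℝ) ≤ τC (Fin.last mC) := by
      simp only [hτCdef]
      exact_mod_cast iso.monotone h1
    rw [hjn] at h2
    exact h2
  -- key: consecutive values of τC are consecutive cumulative sums
  have hterm : ∀ j : Fin mC, ∃ K : ℕ, K < n ∧ c K = τC j.castSucc ∧ c (K+1) = τC j.succ := by
    intro j
    have hab : τC j.castSucc < τC j.succ := hτCsm (Fin.castSucc_lt_succ (i := j))
    have haC : τC j.castSucc ∈ C := hτCmem _
    have hbC : τC j.succ ∈ C := hτCmem _
    have hblen : τC j.succ ≤ c n := (hCub _ hbC).2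
    set S : Finset ℕ := (Finset.range n).filter (fun k0 => c k0 = τC j.castSucc) with hSdef
    have hSne : S.Nonempty := by
      rw [hCdef] at haC
      obtain ⟨k0, hk0r, hk0⟩ := Finset.mem_image.mp haC
      have hk0n : k0 ≤ n := by
        have := Finset.mem_range.mp hk0r
        omega
      have hk0n' : k0 < n := by
        rcases Nat.lt_or_ge k0 n with h | h
        · exact h
        · exfalso
          have : k0 = n := by omega
          subst this
          rw [hk0] at hblen
          exact absurd (lt_of_lt_of_le hab hblen) (lt_irrefl _)
      exact ⟨k0, Finset.mem_filter.mpr ⟨Finset.mem_range.mpr hk0n', hk0⟩⟩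
    set K := S.max' hSne with hKdef
    have hKS : K ∈ S := S.max'_mem hSne
    have hKn : K < n := Finset.mem_range.mp (Finset.mem_filter.mp hKS).1
    have hKa : c K = τC j.castSucc := (Finset.mem_filter.mp hKS).2
    have hK1ne : c (K+1) ≠ τC j.castSucc := by
      intro hc'
      rcases Nat.lt_or_ge (K+1) n with h | h
      · have hmem : K + 1 ∈ S := Finset.mem_filter.mpr ⟨Finset.mem_range.mpr h, hc'⟩
        have := S.le_max' _ hmem
        omega
      · have hKn1 : K + 1 = n := by omega
        rw [hKn1] at hc'
        rw [hc'] at hblen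
        exact absurd (lt_of_lt_of_le hab hblen) (lt_irrefl _)
    have hK1gt : τC j.castSucc < c (K+1) := by
      refine lt_of_le_of_ne ?_ (Ne.symm hK1ne)
      rw [← hKa]
      exact hcmono (by omega)
    have hK1C : c (K+1) ∈ C := by
      rw [hCdef]
      exact Finset.mem_image.mpr ⟨K+1, Finset.mem_range.mpr (by omega), rfl⟩
    have hge : τC j.succ ≤ c (K+1) := by
      obtain ⟨jy, hjy⟩ := iso.surjective ⟨c (K+1), hK1C⟩
      have hlt : Fin.cast hcast j.castSucc < jy := by
        have : (iso (Fin.cast hcast j.castSucc) : ℝ) < (iso jy : ℝ) := by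
          rw [hjy]
          exact hK1gt
        have h2 : iso (Fin.cast hcast j.castSucc) < iso jy := by exact_mod_cast this
        exact iso.lt_iff_lt.mp h2
      have hsle : Fin.cast hcast j.succ ≤ jy := by
        simp only [Fin.le_def, Fin.coe_cast, Fin.val_succ]
        have h3 : (Fin.cast hcast j.castSucc).val < jy.val := hlt
        simp only [Fin.coe_cast, Fin.coe_castSucc] at h3
        omega
      have h4 : (iso (Fin.cast hcast j.succ) : ℝ) ≤ (iso jy : ℝ) := by
        exact_mod_cast iso.monotone hsle
      rw [hjy] at h4
      exact h4
    have hle : c (K+1) ≤ τC j.succ := by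
      have hbC' := hbC
      rw [hCdef] at hbC'
      obtain ⟨kb, hkbr, hkb⟩ := Finset.mem_image.mp hbC'
      have hkbK : K + 1 ≤ kb := by
        by_contra hc'
        push_neg at hc'
        have h5 : c kb ≤ c K := hcmono (by omega)
        rw [hkb, hKa] at h5
        exact absurd (lt_of_lt_of_le hab h5) (lt_irrefl _)
      rw [← hkb]
      exact hcmono hkbK
    exact ⟨K, hKn, hKa, le_antisymm hle hge⟩
  choose K hKlt hKa hKb using hterm
  have hKinj : Function.Injective K := by
    intro j1 j2 h
    have h1 : τC j1.succ = τC j2.succ := by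
      rw [← hKb j1, ← hKb j2, h]
    have := hτCsm.injective h1
    exact Fin.succ_injective _ this
  -- final sum bound
  have hbound : ∑ j : Fin mC, decRearr μ f (τC j.castSucc) ^ q *
      ENNReal.ofReal (τC j.succ - τC j.castSucc) ^ (q / p) ≤
      ∑ i : Fin n, σ i ^ q * μ (A i) ^ (q / p) := by
    have hstep2 : ∀ j : Fin mC,
        decRearr μ f (τC j.castSucc) ^ q *
          ENNReal.ofReal (τC j.succ - τC j.castSucc) ^ (q / p) ≤
        σ (e ⟨K j, hKlt j⟩) ^ q * μ (A (e ⟨K j, hKlt j⟩)) ^ (q / p) := by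
      intro j
      have hd : decRearr μ f (τC j.castSucc) ≤ σ (e ⟨K j, hKlt j⟩) := by
        rw [← hKa j]
        exact hdec (K j) (hKlt j)
      have hΔ : ENNReal.ofReal (τC j.succ - τC j.castSucc) = μ (A (e ⟨K j, hKlt j⟩)) := by
        rw [← hKa j, ← hKb j, hstep (K j)]
        rw [add_sub_cancel_left]
        rw [ENNReal.ofReal_toReal (hMBfin (K j))]
        simp only [hMBdef, hBNdef]
        rw [dif_pos (hKlt j)]
      rw [hΔ]
      exact mul_le_mul_left (ENNReal.rpow_le_rpow hd hq.le) _
    calc ∑ j : Fin mC, decRearr μ f (τC j.castSucc) ^ q *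
          ENNReal.ofReal (τC j.succ - τC j.castSucc) ^ (q / p)
        ≤ ∑ j : Fin mC, σ (e ⟨K j, hKlt j⟩) ^ q * μ (A (e ⟨K j, hKlt j⟩)) ^ (q / p) :=
          Finset.sum_le_sum fun j _ => hstep2 j
      _ = ∑ i ∈ Finset.univ.image (fun j : Fin mC => (⟨K j, hKlt j⟩ : Fin n)),
            σ (e i) ^ q * μ (A (e i)) ^ (q / p) := by
          rw [Finset.sum_image]
          intro j1 _ j2 _ h
          apply hKinj
          simpa [Fin.mk.injEq] using congrArg Fin.val h
      _ ≤ ∑ i : Fin n, σ (e i) ^ q * μ (A (e i)) ^ (q / p) :=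
          Finset.sum_le_sum_of_subset (Finset.subset_univ _)
      _ = ∑ i : Fin n, σ i ^ q * μ (A i) ^ (q / p) :=
          Equiv.sum_comp e (fun i => σ i ^ q * μ (A i) ^ (q / p))
  refine le_trans (iInf_le_of_le mC (iInf_le_of_le τC (iInf_le_of_le hτC0
    (iInf_le_of_le hτCsm (iInf_le_of_le hτClast le_rfl))))) ?_
  exact ENNReal.rpow_le_rpow hbound (by positivity)


/-- For `0 < q < p < ∞` and a finite Borel measure `μ`, the
`Λ_{p,q}(μ)` functional (infimum version) of a Borel function `f` equals
`inf_𝒯 (Σⱼ f*(τⱼ₋₁)^q (τⱼ - τⱼ₋₁)^{q/p})^{1/q}` over finite sets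
`𝒯 = {τ₀ = 0 < τ₁ < ⋯ < τₙ = μ(Ω)}`. -/
theorem lambdaInf_eq_inf_rearrangement
    {Ω : Type*} [TopologicalSpace Ω] [CompactSpace Ω] [T2Space Ω]
    [MeasurableSpace Ω] [BorelSpace Ω]
    (p q : ℝ) (hq : 0 < q) (hqp : q < p)
    (μ : Measure Ω) [IsFiniteMeasure μ]
    (f : Ω → ℝ) (hf : Measurable f) :
    LambdaInf μ p q f =
      ⨅ (n : ℕ) (τ : Fin (n + 1) → ℝ) (_ : τ 0 = 0) (_ : StrictMono τ)
        (_ : τ (Fin.last n) = (μ univ).toReal),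
        (∑ j : Fin n, decRearr μ f (τ j.castSucc) ^ q *
          ENNReal.ofReal (τ j.succ - τ j.castSucc) ^ (q / p)) ^ (1 / q) := by
  have hp : 0 < p := lt_trans hq hqp
  apply le_antisymm
  · refine le_iInf fun n => le_iInf fun τ => le_iInf fun h0 => le_iInf fun hsm =>
      le_iInf fun hlast => ?_
    exact dir2 p q hq hqp hp μ f hf n τ h0 hsm hlast
  · unfold LambdaInf
    refine le_iInf fun n => le_iInf fun A => le_iInf fun hA => ?_
    exact dir1 p q hq hqp hp μ f n A hA
end

section
/- Let μ be a Borel probability measure on a compact Hausdorff space Ω and let 0 < r < p < q < ∞. Then for every Borel function w ≥ 0, ∫ w^r dμ ≤ (p/q) ((q − r)/(p − r))^{1 − r/q} ‖w‖_{L_{p,q}(μ)}^r. -/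
open Set Filter Topology MeasureTheory ENNReal

section Helpers

variable {Ω : Type*} [MeasurableSpace Ω] {μ : Measure Ω} {w : Ω → ℝ}

lemma decRearr_anti_s15 : Antitone (decRearr μ w) := by
  intro t t' htt'
  refine le_iInf₂ fun E hE => le_iInf fun hμE => ?_
  exact iInf₂_le_of_le E hE (iInf_le_of_le (hμE.trans (ENNReal.ofReal_le_ofReal htt')) le_rfl)

lemma decRearr_measurable : Measurable (decRearr μ w) := decRearr_anti_s15.measurable

lemma ofReal_le_decRearr {s t : ℝ} (hst : ENNReal.ofReal t < μ {x | s < w x}) :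
    ENNReal.ofReal s ≤ decRearr μ w t := by
  refine le_iInf₂ fun E hE => le_iInf fun hμE => ?_
  have : ¬ {x | s < w x} ⊆ E := fun h => absurd (measure_mono h) (by
    intro h2; exact absurd (h2.trans hμE) hst.not_ge)
  obtain ⟨x, hxs, hxE⟩ := not_subset.mp this
  calc ENNReal.ofReal s ≤ ENNReal.ofReal |w x| :=
        ENNReal.ofReal_le_ofReal (le_trans (le_of_lt hxs) (le_abs_self _))
    _ ≤ ⨆ x ∈ Eᶜ, ENNReal.ofReal |w x| := le_biSup (fun x => ENNReal.ofReal |w x|) (show x ∈ Eᶜ from hxE)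

lemma meas_le_vol [IsProbabilityMeasure μ] (s : ℝ) :
    μ {x | s < w x} ≤ volume {t | t ∈ Ioi (0:ℝ) ∧ ENNReal.ofReal s ≤ decRearr μ w t} := by
  set d := μ {x | s < w x} with hd
  have hdne : d ≠ ⊤ := (measure_lt_top μ _).ne
  have hsub : Ioo (0:ℝ) d.toReal ⊆ {t | t ∈ Ioi (0:ℝ) ∧ ENNReal.ofReal s ≤ decRearr μ w t} := by
    rintro t ⟨ht0, htd⟩
    refine ⟨ht0, ofReal_le_decRearr ?_⟩
    calc ENNReal.ofReal t < ENNReal.ofReal d.toReal :=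
          (ENNReal.ofReal_lt_ofReal_iff (ht0.trans htd)).mpr htd
      _ = d := ENNReal.ofReal_toReal hdne
  calc d = ENNReal.ofReal d.toReal := (ENNReal.ofReal_toReal hdne).symm
    _ = volume (Ioo (0:ℝ) d.toReal) := by rw [Real.volume_Ioo, sub_zero]
    _ ≤ _ := measure_mono hsub

lemma lintegral_rpow_Ioc {c β : ℝ} (hc : 0 ≤ c) (hβ : -1 < β) :
    ∫⁻ s in Ioc (0:ℝ) c, ENNReal.ofReal (s ^ β) = ENNReal.ofReal (c ^ (β+1) / (β+1)) := by
  have hint : IntegrableOn (fun s : ℝ => s ^ β) (Ioc 0 c) volume :=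
    (intervalIntegrable_iff_integrableOn_Ioc_of_le hc).mp
      (intervalIntegral.intervalIntegrable_rpow' hβ)
  rw [← MeasureTheory.ofReal_integral_eq_lintegral_ofReal hint ?_]
  · congr 1
    rw [← intervalIntegral.integral_of_le hc, integral_rpow (Or.inl hβ),
      Real.zero_rpow (by linarith), sub_zero]
  · filter_upwards [self_mem_ae_restrict measurableSet_Ioc] with s hs
    exact Real.rpow_nonneg hs.1.le β

lemma lintegral_rpow_Ioo01 {β : ℝ} (hβ : -1 < β) :
    ∫⁻ s in Ioo (0:ℝ) 1, ENNReal.ofReal (s ^ β) = ENNReal.ofReal (1 / (β+1)) := by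
  rw [setLIntegral_congr Ioo_ae_eq_Ioc]
  have h := lintegral_rpow_Ioc (c := 1) zero_le_one hβ
  rwa [Real.one_rpow] at h

lemma inner_le {a : ℝ≥0∞} {r : ℝ} (hr : 0 < r) :
    ENNReal.ofReal r * ∫⁻ s in Ioi (0:ℝ),
        {s : ℝ | ENNReal.ofReal s ≤ a}.indicator (fun s => ENNReal.ofReal (s ^ (r-1))) s
      ≤ a ^ r := by
  rcases eq_or_ne a ⊤ with rfl | ha
  · rw [ENNReal.top_rpow_of_pos hr]; exact le_top
  set c := a.toReal with hc
  have hc0 : 0 ≤ c := ENNReal.toReal_nonneg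
  have key : ∀ s : ℝ, 0 < s → ({s : ℝ | ENNReal.ofReal s ≤ a}.indicator
      (fun s => ENNReal.ofReal (s ^ (r-1))) s
      = (Ioc (0:ℝ) c).indicator (fun s => ENNReal.ofReal (s ^ (r-1))) s) := by
    intro s hs
    simp only [Set.indicator_apply, mem_setOf_eq, mem_Ioc]
    by_cases h : ENNReal.ofReal s ≤ a
    · rw [if_pos h, if_pos ⟨hs, (ENNReal.ofReal_le_iff_le_toReal ha).mp h⟩]
    · rw [if_neg h, if_neg]
      rintro ⟨-, hmem⟩
      exact h ((ENNReal.ofReal_le_iff_le_toReal ha).mpr hmem)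
  calc ENNReal.ofReal r * ∫⁻ s in Ioi (0:ℝ),
        {s : ℝ | ENNReal.ofReal s ≤ a}.indicator (fun s => ENNReal.ofReal (s ^ (r-1))) s
      = ENNReal.ofReal r * ∫⁻ s in Ioi (0:ℝ),
        (Ioc (0:ℝ) c).indicator (fun s => ENNReal.ofReal (s ^ (r-1))) s := by
        congr 1
        refine setLIntegral_congr_fun measurableSet_Ioi ?_
        exact fun s hs => key s hs
    _ = ENNReal.ofReal r * ∫⁻ s in Ioc (0:ℝ) c, ENNReal.ofReal (s ^ (r-1)) := by
        rw [lintegral_indicator measurableSet_Ioc, Measure.restrict_restrict measurableSet_Ioc,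
          inter_eq_left.mpr (Ioc_subset_Ioi_self)]
    _ = ENNReal.ofReal r * ENNReal.ofReal (c ^ r / r) := by
        rw [lintegral_rpow_Ioc hc0 (by linarith), sub_add_cancel]
    _ = ENNReal.ofReal (c ^ r) := by
        rw [← ENNReal.ofReal_mul hr.le, mul_div_cancel₀ _ hr.ne']
    _ = a ^ r := by
        rw [← ENNReal.ofReal_rpow_of_nonneg hc0 hr.le, ENNReal.ofReal_toReal ha]
    _ ≤ a ^ r := le_rfl

lemma part1 [IsProbabilityMeasure μ] {r : ℝ} (hr : 0 < r)
    (hw : Measurable w) (hw0 : ∀ x, 0 ≤ w x) :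
    ∫⁻ x, ENNReal.ofReal (w x ^ r) ∂μ ≤ ∫⁻ t in Ioi (0:ℝ), decRearr μ w t ^ r := by
  set G : ℝ × ℝ → ℝ≥0∞ :=
    ({p : ℝ × ℝ | ENNReal.ofReal p.1 ≤ decRearr μ w p.2}.indicator
      (fun p => ENNReal.ofReal (p.1 ^ (r-1)))) with hG
  have hS : MeasurableSet {p : ℝ × ℝ | ENNReal.ofReal p.1 ≤ decRearr μ w p.2} :=
    measurableSet_le (measurable_fst.ennreal_ofReal) (decRearr_measurable.comp measurable_snd)
  have hGmeas : Measurable G := by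
    refine Measurable.indicator ?_ hS
    measurability
  have hA : ∀ s : ℝ, MeasurableSet {t : ℝ | ENNReal.ofReal s ≤ decRearr μ w t} :=
    fun s => measurableSet_le measurable_const decRearr_measurable
  rw [lintegral_rpow_eq_lintegral_meas_lt_mul μ (ae_of_all _ hw0) hw.aemeasurable hr]
  calc ENNReal.ofReal r * ∫⁻ s in Ioi (0:ℝ), μ {a | s < w a} * ENNReal.ofReal (s ^ (r-1))
      ≤ ENNReal.ofReal r * ∫⁻ s in Ioi (0:ℝ),
          volume {t | t ∈ Ioi (0:ℝ) ∧ ENNReal.ofReal s ≤ decRearr μ w t}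
            * ENNReal.ofReal (s ^ (r-1)) := by
        gcongr with s
        exact meas_le_vol s
    _ = ENNReal.ofReal r * ∫⁻ s in Ioi (0:ℝ), ∫⁻ t in Ioi (0:ℝ), G (s, t) := by
        congr 1
        refine lintegral_congr fun s => ?_
        have : (fun t => G (s, t))
            = {t : ℝ | ENNReal.ofReal s ≤ decRearr μ w t}.indicator
                (fun _ => ENNReal.ofReal (s ^ (r-1))) := by
          funext t
          simp only [hG, Set.indicator_apply, mem_setOf_eq]
        have hset : {t : ℝ | ENNReal.ofReal s ≤ decRearr μ w t} ∩ Ioi 0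
            = {t | t ∈ Ioi (0:ℝ) ∧ ENNReal.ofReal s ≤ decRearr μ w t} := by
          ext t; simp [and_comm]
        rw [this, lintegral_indicator_const (hA s), Measure.restrict_apply (hA s), hset, mul_comm]
    _ = ENNReal.ofReal r * ∫⁻ t in Ioi (0:ℝ), ∫⁻ s in Ioi (0:ℝ), G (s, t) := by
        congr 1
        exact lintegral_lintegral_swap (hGmeas.aemeasurable)
    _ = ∫⁻ t in Ioi (0:ℝ), ENNReal.ofReal r * ∫⁻ s in Ioi (0:ℝ), G (s, t) := by
        rw [lintegral_const_mul' _ _ ENNReal.ofReal_ne_top]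
    _ ≤ ∫⁻ t in Ioi (0:ℝ), decRearr μ w t ^ r := by
        refine lintegral_mono fun t => ?_
        have : (fun s => G (s, t))
            = fun s => {s : ℝ | ENNReal.ofReal s ≤ decRearr μ w t}.indicator
                (fun s => ENNReal.ofReal (s ^ (r-1))) s := by
          funext s
          simp only [hG, Set.indicator_apply, mem_setOf_eq]
        calc ENNReal.ofReal r * ∫⁻ s in Ioi (0:ℝ), G (s, t)
            = ENNReal.ofReal r * ∫⁻ s in Ioi (0:ℝ),
                {s : ℝ | ENNReal.ofReal s ≤ decRearr μ w t}.indicator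
                  (fun s => ENNReal.ofReal (s ^ (r-1))) s := by rw [this]
          _ ≤ decRearr μ w t ^ r := inner_le hr

lemma decRearr_eq_zero [IsProbabilityMeasure μ] {t : ℝ} (ht : 1 ≤ t) :
    decRearr μ w t = 0 := by
  refine le_antisymm ?_ (by simp)
  refine iInf₂_le_of_le univ MeasurableSet.univ (iInf_le_of_le ?_ ?_)
  · simp [ENNReal.one_le_ofReal.mpr ht]
  · simp

set_option maxHeartbeats 1000000 in
lemma part2 [IsProbabilityMeasure μ] {r p q : ℝ} (hr : 0 < r) (hrp : r < p) (hpq : p < q) :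
    ∫⁻ t in Ioi (0:ℝ), decRearr μ w t ^ r ≤
      ENNReal.ofReal (p / q * ((q - r) / (p - r)) ^ (1 - r / q)) * LorentzNorm μ p q w ^ r := by
  have hp : 0 < p := hr.trans hrp
  have hq : 0 < q := hp.trans hpq
  have hqr : 0 < q - r := by linarith
  have hpr : 0 < p - r := by linarith
  set α : ℝ := (q/p - 1) * (r/q) with hα
  clear_value α
  set β : ℝ := -α * (q/(q-r)) with hβdef
  clear_value β
  have hβ1 : β + 1 = q*(p-r)/(p*(q-r)) := by
    rw [hβdef, hα]; field_simp; ring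
  have hβpos : 0 < β + 1 := hβ1 ▸ div_pos (mul_pos hq hpr) (mul_pos hp hqr)
  have hβ : -1 < β := by linarith
  set D := decRearr μ w with hD
  have hDm : Measurable D := decRearr_measurable
  clear_value D
  -- reduce to Ioo 0 1
  have hsplit : ∫⁻ t in Ioi (0:ℝ), D t ^ r = ∫⁻ t in Ioo (0:ℝ) 1, D t ^ r := by
    rw [← Ioo_union_Ici_eq_Ioi zero_lt_one,
      lintegral_union measurableSet_Ici
        (disjoint_left.mpr fun t ht h1 => ht.2.not_ge h1)]
    have hzero : ∫⁻ t in Ici (1:ℝ), D t ^ r = 0 := by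
      rw [setLIntegral_congr_fun measurableSet_Ici
        (fun t (ht : 1 ≤ t) => by
          rw [hD, decRearr_eq_zero ht, ENNReal.zero_rpow_of_pos hr]),
        lintegral_zero]
    rw [hzero, add_zero]
  set f : ℝ → ℝ≥0∞ := fun t => ENNReal.ofReal (t ^ α) * D t ^ r with hf
  set g : ℝ → ℝ≥0∞ := fun t => ENNReal.ofReal (t ^ (-α)) with hg
  clear_value f
  have hfm : Measurable f := by
    rw [hf]; exact Measurable.mul (by measurability) (by measurability)
  clear_value g
  have hgm : Measurable g := by rw [hg]; measurability
  have hconj : Real.HolderConjugate (q/r) (q/(q-r)) := by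
    rw [Real.holderConjugate_iff]
    constructor
    · exact (one_lt_div hr).mpr (hrp.trans hpq)
    · rw [inv_div, inv_div, ← add_div, add_sub_cancel, div_self hq.ne']
  have hWfg : ∫⁻ t in Ioo (0:ℝ) 1, D t ^ r = ∫⁻ t in Ioo (0:ℝ) 1, (f * g) t := by
    refine setLIntegral_congr_fun measurableSet_Ioo (fun t ht => ?_)
    have h0 : α + -α = 0 := by ring
    simp only [Pi.mul_apply, hf, hg]
    rw [mul_right_comm, ← ENNReal.ofReal_mul (Real.rpow_nonneg ht.1.le _),
      ← Real.rpow_add ht.1, h0, Real.rpow_zero, ENNReal.ofReal_one, one_mul]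
  have hH := ENNReal.lintegral_mul_le_Lp_mul_Lq (volume.restrict (Ioo (0:ℝ) 1)) hconj
    hfm.aemeasurable hgm.aemeasurable
  -- compute F
  have hα2 : α * (q/r) = q/p - 1 := by rw [hα]; field_simp
  have hrq : r * (q/r) = q := by field_simp
  have hF : ∫⁻ t in Ioo (0:ℝ) 1, f t ^ (q/r)
      = ∫⁻ t in Ioo (0:ℝ) 1, ENNReal.ofReal (t ^ (q/p - 1)) * D t ^ q := by
    refine setLIntegral_congr_fun measurableSet_Ioo (fun t ht => ?_)
    simp only [hf]
    rw [ENNReal.mul_rpow_of_nonneg _ _ (div_nonneg hq.le hr.le),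
      ENNReal.ofReal_rpow_of_nonneg (Real.rpow_nonneg ht.1.le _) (div_nonneg hq.le hr.le),
      ← Real.rpow_mul ht.1.le, hα2, ← ENNReal.rpow_mul, hrq]
  -- compute G
  have hGint : ∫⁻ t in Ioo (0:ℝ) 1, g t ^ (q/(q-r)) = ENNReal.ofReal (1/(β+1)) := by
    rw [← lintegral_rpow_Ioo01 hβ]
    refine setLIntegral_congr_fun measurableSet_Ioo (fun t ht => ?_)
    simp only [hg]
    rw [ENNReal.ofReal_rpow_of_nonneg (Real.rpow_nonneg ht.1.le _)
      (div_nonneg hq.le hqr.le), ← Real.rpow_mul ht.1.le, hβdef]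
  -- Lorentz norm
  set L := LorentzNorm μ p q w with hL
  clear_value L
  have hLq : L ^ q = ∫⁻ t in Ioi (0:ℝ),
      ENNReal.ofReal (q/p * t ^ (q/p - 1)) * D t ^ q := by
    rw [hL, LorentzNorm, ← hD, ← ENNReal.rpow_mul, one_div, inv_mul_cancel₀ hq.ne',
      ENNReal.rpow_one]
  have hFL : ∫⁻ t in Ioo (0:ℝ) 1, ENNReal.ofReal (t ^ (q/p-1)) * D t ^ q
      ≤ ENNReal.ofReal (p/q) * L ^ q := by
    set X := ∫⁻ t in Ioo (0:ℝ) 1, ENNReal.ofReal (t ^ (q/p-1)) * D t ^ q with hX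
    clear_value X
    have h1 : ENNReal.ofReal (q/p) * X ≤ L ^ q := by
      rw [hLq]
      calc ENNReal.ofReal (q/p) * X
          = ∫⁻ t in Ioo (0:ℝ) 1, ENNReal.ofReal (q/p * t ^ (q/p-1)) * D t ^ q := by
            rw [hX, ← lintegral_const_mul' _ _ ENNReal.ofReal_ne_top]
            refine lintegral_congr fun t => ?_
            rw [← mul_assoc, ← ENNReal.ofReal_mul (div_nonneg hq.le hp.le)]
        _ ≤ _ := lintegral_mono_set Ioo_subset_Ioi_self
    have h2 : (p/q) * (q/p) = 1 := by field_simp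
    calc X = ENNReal.ofReal (p/q) * (ENNReal.ofReal (q/p) * X) := by
          rw [← mul_assoc, ← ENNReal.ofReal_mul (div_nonneg hp.le hq.le), h2,
            ENNReal.ofReal_one, one_mul]
      _ ≤ ENNReal.ofReal (p/q) * L ^ q := mul_le_mul_right h1 _
  -- assemble
  have hqrq : q * (r/q) = r := by field_simp
  have hconst : (p/q) ^ (r/q) * (1/(β+1)) ^ ((q-r)/q)
      = p/q * ((q-r)/(p-r)) ^ (1 - r/q) := by
    have h1 : 1/(β+1) = (p/q) * ((q-r)/(p-r)) := by
      rw [hβ1, one_div_div, div_mul_div_comm]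
    have h2 : r/q + (q-r)/q = 1 := by field_simp; ring
    have h3 : (q-r)/q = 1 - r/q := by rw [sub_div, div_self hq.ne']
    rw [h1, Real.mul_rpow (by positivity) (by positivity), ← mul_assoc,
      ← Real.rpow_add (div_pos hp hq), h2, Real.rpow_one, h3]
  calc ∫⁻ t in Ioi (0:ℝ), D t ^ r
      = ∫⁻ t in Ioo (0:ℝ) 1, (f * g) t := by rw [hsplit, hWfg]
    _ ≤ (∫⁻ t in Ioo (0:ℝ) 1, f t ^ (q/r)) ^ (1/(q/r))
        * (∫⁻ t in Ioo (0:ℝ) 1, g t ^ (q/(q-r))) ^ (1/(q/(q-r))) := hH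
    _ = (∫⁻ t in Ioo (0:ℝ) 1, ENNReal.ofReal (t ^ (q/p-1)) * D t ^ q) ^ (r/q)
        * ENNReal.ofReal ((1/(β+1)) ^ ((q-r)/q)) := by
        rw [hF, hGint, one_div_div, one_div_div,
          ENNReal.ofReal_rpow_of_nonneg (by positivity) (div_nonneg hqr.le hq.le)]
    _ ≤ (ENNReal.ofReal (p/q) * L ^ q) ^ (r/q)
        * ENNReal.ofReal ((1/(β+1)) ^ ((q-r)/q)) :=
        mul_le_mul_left (ENNReal.rpow_le_rpow hFL (div_nonneg hr.le hq.le)) _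
    _ = ENNReal.ofReal ((p/q) ^ (r/q)) * L ^ r
        * ENNReal.ofReal ((1/(β+1)) ^ ((q-r)/q)) := by
        rw [ENNReal.mul_rpow_of_nonneg _ _ (div_nonneg hr.le hq.le),
          ENNReal.ofReal_rpow_of_nonneg (div_nonneg hp.le hq.le) (div_nonneg hr.le hq.le),
          ← ENNReal.rpow_mul, hqrq]
    _ = ENNReal.ofReal ((p/q) ^ (r/q) * (1/(β+1)) ^ ((q-r)/q)) * L ^ r := by
        rw [mul_right_comm, ← ENNReal.ofReal_mul (by positivity)]
    _ = ENNReal.ofReal (p/q * ((q-r)/(p-r)) ^ (1 - r/q)) * L ^ r := by rw [hconst]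

end Helpers

/-- For a Borel probability measure `μ` on a compact Hausdorff space and
`0 < r < p < q < ∞`, every Borel `w ≥ 0` satisfies
`∫ w^r dμ ≤ (p/q) ((q-r)/(p-r))^{1-r/q} ‖w‖_{L_{p,q}(μ)}^r`. -/
theorem lintegral_rpow_le_lorentz
    {Ω : Type*} [TopologicalSpace Ω] [CompactSpace Ω] [T2Space Ω]
    [MeasurableSpace Ω] [BorelSpace Ω]
    (μ : Measure Ω) [IsProbabilityMeasure μ]
    (r p q : ℝ) (hr : 0 < r) (hrp : r < p) (hpq : p < q)
    (w : Ω → ℝ) (hw : Measurable w) (hw0 : ∀ x, 0 ≤ w x) :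
    ∫⁻ x, ENNReal.ofReal (w x ^ r) ∂μ ≤
      ENNReal.ofReal (p / q * ((q - r) / (p - r)) ^ (1 - r / q)) *
        LorentzNorm μ p q w ^ r := by
  calc ∫⁻ x, ENNReal.ofReal (w x ^ r) ∂μ
      ≤ ∫⁻ t in Ioi (0:ℝ), decRearr μ w t ^ r := part1 hr hw hw0
    _ ≤ ENNReal.ofReal (p / q * ((q - r) / (p - r)) ^ (1 - r / q)) *
        LorentzNorm μ p q w ^ r := part2 hr hrp hpq
end
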